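/- arXiv:1301.0896 — 5 statements merged into one kernel-verified Lean document; each statement's English description precedes it below -/
import Mathlib

section
/- Let G be a group, R a commutative ring with trivial G-action, and C•(G,R) the DGA of inhomogeneous cochains. A system of 1-cochains c_{ij}: G → R for 1 ≤ i ≤ j ≤ n, (i,j) ≠ (1,n), corresponds to the map γ̄: G → Ū_{n+1}(R) with γ̄(σ)_{i,j} = (−1)^{j−i} c_{i,j−1}(σ) for i < j; then γ̄ is a group homomorphism if and only if (c_{ij}) is a defining system, i.e., for all applicable (i,l), ∂c_{il}(σ,τ) = −∑_{r=i}^{l−1} c_{ir}(σ) c_{r+1,l}(τ). -/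
lemma stmt14_aux {R : Type*} [CommRing R] (n : ℕ) (a b : ℕ → ℕ → R)
    (i j : ℕ) (hj : j ≤ n) (hij : i < j) :
    ∑ k ∈ Finset.range (n+1),
      (if i < k then (-1:R)^(k-i) * a (i+1) k else if i = k then 1 else 0) *
      (if k < j then (-1:R)^(j-k) * b (k+1) j else if k = j then 1 else 0)
    = (-1:R)^(j-i) * (a (i+1) j + b (i+1) j +
        ∑ r ∈ Finset.Ico (i+1) j, a (i+1) r * b (r+1) j) := by
  have h1 : ∑ k ∈ Finset.range (n+1),
      (if i < k then (-1:R)^(k-i) * a (i+1) k else if i = k then 1 else 0) *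
      (if k < j then (-1:R)^(j-k) * b (k+1) j else if k = j then 1 else 0)
      = ∑ k ∈ Finset.Icc i j,
      (if i < k then (-1:R)^(k-i) * a (i+1) k else if i = k then 1 else 0) *
      (if k < j then (-1:R)^(j-k) * b (k+1) j else if k = j then 1 else 0) := by
    apply (Finset.sum_subset ?_ ?_).symm
    · intro k hk
      simp only [Finset.mem_Icc, Finset.mem_range] at *
      omega
    · intro k hk1 hk2
      simp only [Finset.mem_Icc, Finset.mem_range, not_and_or, not_le] at hk1 hk2
      rcases hk2 with h | h
      · rw [if_neg (by omega : ¬ i < k), if_neg (by omega : ¬ i = k), zero_mul]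
      · rw [if_neg (by omega : ¬ k < j), if_neg (by omega : ¬ k = j), mul_zero]
  rw [h1, ← Finset.Ioc_insert_left hij.le, Finset.sum_insert Finset.left_notMem_Ioc,
    ← Finset.Ioo_insert_right hij, Finset.sum_insert Finset.right_notMem_Ioo]
  rw [if_neg (lt_irrefl i), if_pos rfl, one_mul, if_pos hij, if_pos hij,
    if_neg (lt_irrefl j), if_pos rfl, mul_one]
  have hmid : ∑ k ∈ Finset.Ioo i j,
      (if i < k then (-1:R)^(k-i) * a (i+1) k else if i = k then 1 else 0) *
      (if k < j then (-1:R)^(j-k) * b (k+1) j else if k = j then 1 else 0)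
      = (-1:R)^(j-i) * ∑ r ∈ Finset.Ico (i+1) j, a (i+1) r * b (r+1) j := by
    rw [Finset.mul_sum, ← Finset.Ico_add_one_left_eq_Ioo]
    apply Finset.sum_congr rfl
    intro k hk
    simp only [Finset.mem_Ico] at hk
    rw [if_pos (by omega), if_pos (by omega)]
    have : j - i = (k - i) + (j - k) := by omega
    rw [this, pow_add]; ring
  rw [hmid]; ring

/-- Dwyer's correspondence, punctured form.
Let `G` be a group, `R` a commutative ring (trivial `G`-action).  A system of 1-cochains
`c_{ij} : G → R` for `1 ≤ i ≤ j ≤ n`, `(i,j) ≠ (1,n)` (encoded as `c : ℕ → ℕ → G → R`,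
only indices in this range being relevant), corresponds to the map
`γ̄ : G → Ū_{n+1}(R)` with `γ̄(σ)_{i,j} = (−1)^{j−i} c_{i,j−1}(σ)` for `i < j`
(diagonal `1`, lower entries `0`; below indices are 0-based, so the `(1,n+1)` entry is
`(0, Fin.last n)` and the matrix formula reads `(−1)^{j−i} c_{i+1,j}(σ)`).
Then `γ̄` is a group homomorphism into `Ū_{n+1}(R)` (i.e. multiplicative at all entries
other than the omitted one) if and only if `(c_{ij})` is a defining system, i.e.
`∂c_{il}(σ,τ) = −∑_{r=i}^{l−1} c_{ir}(σ) c_{r+1,l}(τ)` for all applicable `(i,l)`,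
where `(∂c)(σ,τ) = c(σ) + c(τ) − c(στ)`. -/
theorem stmt_14 (G : Type*) [Group G] (R : Type*) [CommRing R] (n : ℕ) (hn : 2 ≤ n)
    (c : ℕ → ℕ → G → R) :
    letI γ : G → Matrix (Fin (n + 1)) (Fin (n + 1)) R := fun σ i j =>
      if (i : ℕ) < (j : ℕ) then (-1 : R) ^ ((j : ℕ) - (i : ℕ)) * c ((i : ℕ) + 1) (j : ℕ) σ
      else if i = j then 1 else 0
    (∀ σ τ : G, ∀ i j : Fin (n + 1), ¬(i = 0 ∧ j = Fin.last n) →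
        γ (σ * τ) i j = (γ σ * γ τ) i j) ↔
      (∀ i j : ℕ, 1 ≤ i → i ≤ j → j ≤ n → ¬(i = 1 ∧ j = n) → ∀ σ τ : G,
        c i j σ + c i j τ - c i j (σ * τ) =
          -∑ r ∈ Finset.Ico i j, c i r σ * c (r + 1) j τ) := by
  set γ : G → Matrix (Fin (n + 1)) (Fin (n + 1)) R := fun σ i j =>
      if (i : ℕ) < (j : ℕ) then (-1 : R) ^ ((j : ℕ) - (i : ℕ)) * c ((i : ℕ) + 1) (j : ℕ) σ
      else if i = j then 1 else 0 with hγdef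
  have hγ : ∀ σ (i j : Fin (n+1)), γ σ i j =
      (if (i:ℕ) < (j:ℕ) then (-1:R)^((j:ℕ)-(i:ℕ)) * c ((i:ℕ)+1) (j:ℕ) σ
       else if (i:ℕ) = (j:ℕ) then 1 else 0) := by
    intro σ i j
    simp only [hγdef, Fin.ext_iff]
  have hmul : ∀ σ τ : G, ∀ i j : Fin (n+1),
      (γ σ * γ τ) i j = ∑ k ∈ Finset.range (n+1),
        (if (i:ℕ) < k then (-1:R)^(k-(i:ℕ)) * c ((i:ℕ)+1) k σ
          else if (i:ℕ) = k then 1 else 0) *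
        (if k < (j:ℕ) then (-1:R)^((j:ℕ)-k) * c (k+1) (j:ℕ) τ
          else if k = (j:ℕ) then 1 else 0) := by
    intro σ τ i j
    rw [Matrix.mul_apply, ← Fin.sum_univ_eq_sum_range]
    exact Finset.sum_congr rfl fun k _ => by rw [hγ, hγ]
  constructor
  · intro h i j hi hij hjn hne σ τ
    have hfi : i - 1 < n + 1 := by omega
    have hfj : j < n + 1 := by omega
    have H := h σ τ ⟨i-1, hfi⟩ ⟨j, hfj⟩ (by
      simp only [Fin.ext_iff, Fin.val_last, Fin.val_zero, not_and_or]
      omega)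
    rw [hγ, hmul] at H
    simp only at H
    rw [if_pos (by omega : i - 1 < j)] at H
    rw [stmt14_aux n (fun p q => c p q σ) (fun p q => c p q τ) (i-1) j hjn (by omega)] at H
    have hii : i - 1 + 1 = i := by omega
    rw [hii] at H
    set m := j - (i - 1) with hm
    have hu : (-1:R)^m * (-1:R)^m = 1 := by
      rw [← pow_add, ← two_mul, pow_mul]
      norm_num
    have key : c i j (σ * τ) = c i j σ + c i j τ +
        ∑ r ∈ Finset.Ico i j, c i r σ * c (r+1) j τ := by
      calc c i j (σ * τ) = ((-1:R)^m * (-1:R)^m) * c i j (σ * τ) := by rw [hu, one_mul]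
        _ = (-1:R)^m * ((-1:R)^m * c i j (σ * τ)) := by ring
        _ = (-1:R)^m * ((-1:R)^m * (c i j σ + c i j τ +
              ∑ r ∈ Finset.Ico i j, c i r σ * c (r+1) j τ)) := by rw [H]
        _ = _ := by rw [← mul_assoc, hu, one_mul]
    linear_combination -key
  · intro h σ τ i j hne
    rw [hγ, hmul]
    rcases lt_trichotomy (i:ℕ) (j:ℕ) with hij | hij | hij
    · rw [if_pos hij,
        stmt14_aux n (fun p q => c p q σ) (fun p q => c p q τ) (i:ℕ) (j:ℕ) (by omega) hij]
      have hsys := h ((i:ℕ)+1) (j:ℕ) (by omega) (by omega) (by omega)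
        (by
          simp only [Fin.ext_iff, Fin.val_last, Fin.val_zero, not_and_or] at hne
          omega) σ τ
      linear_combination (-(-1:R)^((j:ℕ)-(i:ℕ))) * hsys
    · rw [if_neg (by omega), if_pos hij]
      rw [Finset.sum_eq_single (i:ℕ)]
      · rw [if_neg (lt_irrefl _), if_pos rfl, if_neg (by omega : ¬ (i:ℕ) < (j:ℕ)),
          if_pos hij, one_mul]
      · intro k _ hk
        rcases lt_or_gt_of_ne hk with hk' | hk'
        · rw [if_neg (by omega : ¬ (i:ℕ) < k), if_neg (by omega : ¬ (i:ℕ) = k), zero_mul]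
        · rw [if_neg (by omega : ¬ k < (j:ℕ)), if_neg (by omega : ¬ k = (j:ℕ)), mul_zero]
      · intro hmem
        exact absurd (Finset.mem_range.mpr (by omega)) hmem
    · rw [if_neg (by omega), if_neg (by omega : ¬ (i:ℕ) = (j:ℕ))]
      refine (Finset.sum_eq_zero ?_).symm
      intro k _
      rcases le_or_gt k (i:ℕ) with hk | hk
      · rcases eq_or_lt_of_le hk with hk' | hk'
        · rw [if_neg (by omega : ¬ k < (j:ℕ)), if_neg (by omega : ¬ k = (j:ℕ)), mul_zero]
        · rw [if_neg (by omega : ¬ (i:ℕ) < k), if_neg (by omega : ¬ (i:ℕ) = k), zero_mul]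
      · rw [if_neg (by omega : ¬ k < (j:ℕ)), if_neg (by omega : ¬ k = (j:ℕ)), mul_zero]
end

section
/- With notation of the correspondence between systems of 1-cochains and matrix-valued maps: a full system (c_{ij}), 1 ≤ i ≤ j ≤ n, corresponds to a map γ: G → U_{n+1}(R), and γ is a group homomorphism if and only if (c_{ij}) is a defining system with additionally ∂c_{1n} = c̃_{1n}. -/
private lemma neg_one_pow_mul_cancel {R : Type*} [CommRing R] {m : ℕ} {x y : R}
    (h : (-1 : R) ^ m * x = (-1 : R) ^ m * y) : x = y := by
  have h2 := congrArg (fun z => (-1 : R) ^ m * z) h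
  simp only [← mul_assoc, ← pow_add] at h2
  rwa [Even.neg_one_pow ⟨m, rfl⟩, one_mul, one_mul] at h2

private lemma key_sum {R : Type*} [CommRing R] {n : ℕ} (a b : ℕ → R) (I J : Fin (n + 1))
    (hIJ : (I : ℕ) < (J : ℕ)) :
    ∑ k : Fin (n + 1),
      (if (I : ℕ) < (k : ℕ) then (-1 : R) ^ ((k : ℕ) - (I : ℕ)) * a (k : ℕ)
        else if (I : ℕ) = (k : ℕ) then 1 else 0) *
      (if (k : ℕ) < (J : ℕ) then (-1 : R) ^ ((J : ℕ) - (k : ℕ)) * b (k : ℕ)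
        else if (k : ℕ) = (J : ℕ) then 1 else 0)
    = (-1 : R) ^ ((J : ℕ) - (I : ℕ)) *
        (a (J : ℕ) + b (I : ℕ) + ∑ r ∈ Finset.Ico ((I : ℕ) + 1) (J : ℕ), a r * b r) := by
  rw [Fin.sum_univ_eq_sum_range (fun k =>
      (if (I : ℕ) < k then (-1 : R) ^ (k - (I : ℕ)) * a k
        else if (I : ℕ) = k then 1 else 0) *
      (if k < (J : ℕ) then (-1 : R) ^ ((J : ℕ) - k) * b k
        else if k = (J : ℕ) then 1 else 0)) (n + 1)]
  have hsub : Finset.Icc (I : ℕ) (J : ℕ) ⊆ Finset.range (n + 1) := by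
    intro k hk
    simp only [Finset.mem_Icc] at hk
    simp only [Finset.mem_range]
    omega
  rw [← Finset.sum_subset hsub (by
    intro k _ hk
    simp only [Finset.mem_Icc, not_and_or, not_le] at hk
    rcases hk with hk | hk
    · rw [if_neg (show ¬ ((I:ℕ) < k) by omega), if_neg (show ¬ ((I:ℕ) = k) by omega), zero_mul]
    · rw [if_neg (show ¬ (k < (J:ℕ)) by omega), if_neg (show ¬ (k = (J:ℕ)) by omega), mul_zero])]
  rw [show Finset.Icc (I : ℕ) (J : ℕ) = Finset.Ico (I : ℕ) ((J : ℕ) + 1) by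
    rw [Finset.Ico_add_one_right_eq_Icc]]
  rw [Finset.sum_Ico_succ_top (by omega)]
  rw [Finset.sum_eq_sum_Ico_succ_bot (by omega)]
  have hmid : ∑ k ∈ Finset.Ico ((I:ℕ) + 1) (J:ℕ),
      ((if (I : ℕ) < k then (-1 : R) ^ (k - (I : ℕ)) * a k
        else if (I : ℕ) = k then 1 else 0) *
      (if k < (J : ℕ) then (-1 : R) ^ ((J : ℕ) - k) * b k
        else if k = (J : ℕ) then 1 else 0))
      = (-1 : R) ^ ((J : ℕ) - (I : ℕ)) * ∑ r ∈ Finset.Ico ((I : ℕ) + 1) (J : ℕ), a r * b r := by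
    rw [Finset.mul_sum]
    refine Finset.sum_congr rfl fun k hk => ?_
    simp only [Finset.mem_Ico] at hk
    rw [if_pos (show (I:ℕ) < k by omega), if_pos (show k < (J:ℕ) by omega),
      show (J:ℕ) - (I:ℕ) = (k - (I:ℕ)) + ((J:ℕ) - k) by omega, pow_add]
    ring
  rw [hmid]
  rw [if_neg (lt_irrefl ((I:ℕ))), if_pos rfl, if_pos hIJ,
    if_pos hIJ, if_neg (lt_irrefl ((J:ℕ))), if_pos rfl]
  ring

/-- Dwyer's correspondence, full form.
With the correspondence between full systems of 1-cochains `c_{ij}` (`1 ≤ i ≤ j ≤ n`,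
encoded as `c : ℕ → ℕ → G → R`) and matrix-valued maps `γ : G → U_{n+1}(R)`,
`γ(σ)_{ij} = (−1)^{j−i} c_{i,j−1}(σ)` for `i < j` (0-based below: `(−1)^{j−i} c_{i+1,j}`),
the map `γ` is a group homomorphism if and only if `(c_{ij})` is a defining system with
additionally `∂c_{1n} = c̃_{1n}`, i.e.
`c_{ij}(σ) + c_{ij}(τ) − c_{ij}(στ) = −∑_{r=i}^{j−1} c_{ir}(σ) c_{r+1,j}(τ)`
for all `1 ≤ i ≤ j ≤ n` (including `(i,j) = (1,n)`). -/
theorem stmt_15 (G : Type*) [Group G] (R : Type*) [CommRing R] (n : ℕ) (hn : 2 ≤ n)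
    (c : ℕ → ℕ → G → R) :
    letI γ : G → Matrix (Fin (n + 1)) (Fin (n + 1)) R := fun σ i j =>
      if (i : ℕ) < (j : ℕ) then (-1 : R) ^ ((j : ℕ) - (i : ℕ)) * c ((i : ℕ) + 1) (j : ℕ) σ
      else if i = j then 1 else 0
    (∀ σ τ : G, γ (σ * τ) = γ σ * γ τ) ↔
      (∀ i j : ℕ, 1 ≤ i → i ≤ j → j ≤ n → ∀ σ τ : G,
        c i j σ + c i j τ - c i j (σ * τ) =
          -∑ r ∈ Finset.Ico i j, c i r σ * c (r + 1) j τ) := by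
  constructor
  · intro h i j hi hij hjn σ τ
    have hE := congrFun (congrFun (h σ τ) ⟨i - 1, by omega⟩) ⟨j, by omega⟩
    erw [Matrix.mul_apply] at hE
    simp only [Fin.ext_iff] at hE
    have hk := key_sum (fun k => c ((i - 1) + 1) k σ) (fun k => c (k + 1) j τ)
      (⟨i - 1, by omega⟩ : Fin (n + 1)) (⟨j, by omega⟩ : Fin (n + 1)) (by simp; omega)
    rw [hk] at hE
    simp only [Fin.val_mk] at hE
    rw [if_pos (show (i : ℕ) - 1 < j by omega)] at hE
    rw [show i - 1 + 1 = i by omega] at hE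
    have hE' := neg_one_pow_mul_cancel hE
    linear_combination -hE'
  · intro hc σ τ
    ext I J
    erw [Matrix.mul_apply]
    simp only [Fin.ext_iff]
    rcases lt_trichotomy (I : ℕ) (J : ℕ) with hIJ | hIJ | hIJ
    · rw [key_sum (fun k => c ((I : ℕ) + 1) k σ) (fun k => c (k + 1) (J : ℕ) τ) I J hIJ,
        if_pos hIJ]
      have := hc ((I : ℕ) + 1) (J : ℕ) (by omega) (by omega) (by omega) σ τ
      linear_combination (-(-1 : R) ^ ((J : ℕ) - (I : ℕ))) * this
    · rw [if_neg (by omega), if_pos hIJ]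
      rw [Finset.sum_eq_single I (fun k _ hk => by
        have hk' : (k : ℕ) ≠ (I : ℕ) := fun h' => hk (Fin.ext h')
        rcases lt_or_gt_of_ne hk' with h' | h'
        · rw [if_neg (show ¬ ((I:ℕ) < (k:ℕ)) by omega),
            if_neg (show ¬ ((I:ℕ) = (k:ℕ)) by omega), zero_mul]
        · rw [if_neg (show ¬ ((k:ℕ) < (J:ℕ)) by omega),
            if_neg (show ¬ ((k:ℕ) = (J:ℕ)) by omega), mul_zero])
        (by simp)]
      rw [if_neg (by omega), if_pos rfl, if_neg (by omega), if_pos hIJ, one_mul]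
    · rw [if_neg (by omega), if_neg (by omega)]
      refine (Finset.sum_eq_zero fun k _ => ?_).symm
      rcases lt_trichotomy ((I:ℕ)) ((k:ℕ)) with h' | h' | h'
      · rw [if_neg (show ¬ ((k:ℕ) < (J:ℕ)) by omega),
          if_neg (show ¬ ((k:ℕ) = (J:ℕ)) by omega), mul_zero]
      · rw [if_neg (show ¬ ((k:ℕ) < (J:ℕ)) by omega),
          if_neg (show ¬ ((k:ℕ) = (J:ℕ)) by omega), mul_zero]
      · rw [if_neg (show ¬ ((I:ℕ) < (k:ℕ)) by omega),
          if_neg (show ¬ ((I:ℕ) = (k:ℕ)) by omega), zero_mul]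
end

section
/- Let C• be a DGA in which every n-tuple of 1-cocycles admits a defining system of size n. Then for every 1 ≤ k < n and 1-cocycles c₁,…,c_k ∈ C¹, there exists a defining system (c_{ij}) of size k on c₁,…,c_k such that the cohomology class [c̃_{1k}] ∈ H² vanishes. -/
/-- `c : ℕ → ℕ → C` (1-based indexing; only indices `1 ≤ i ≤ j ≤ n` are relevant) is a
defining system of size `n` for a differential `d` on a (graded) ring `C`:
`d(c_{ij}) = c̃_{ij} := −∑_{r=i}^{j−1} c_{ir} c_{r+1,j}` for all `1 ≤ i ≤ j ≤ n`
with `(i,j) ≠ (1,n)`. -/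
def IsDefiningSystem {C : Type*} [Ring C] (d : C → C) (n : ℕ) (c : ℕ → ℕ → C) : Prop :=
  ∀ i j : ℕ, 1 ≤ i → i ≤ j → j ≤ n → ¬(i = 1 ∧ j = n) →
    d (c i j) = -∑ r ∈ Finset.Ico i j, c i r * c (r + 1) j

/-- Let `C •` be a DGA (a graded `R`-algebra with degree-`+1`
differential `d`, `d ∘ d = 0`, Leibniz rule) in which every `n`-tuple of 1-cocycles
admits a defining system of size `n`.  Then for every `1 ≤ k < n` and 1-cocycles
`c₁, …, c_k ∈ C¹` there is a defining system `(c_{ij})` of size `k` on `c₁, …, c_k`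
(consisting of degree-1 elements) such that moreover the class `[c̃_{1k}] ∈ H²`
vanishes, i.e. `c̃_{1k} = −∑_{r=1}^{k−1} c_{1r} c_{r+1,k}` is a coboundary `d b`
of a degree-1 element `b`. -/
theorem stmt_17 (R : Type*) [CommRing R] (C : Type*) [Ring C] [Algebra R C]
    (𝒜 : ℤ → Submodule R C) [GradedAlgebra 𝒜]
    (d : C →ₗ[R] C)
    (hd : ∀ (i : ℤ), ∀ a ∈ 𝒜 i, d a ∈ 𝒜 (i + 1))
    (hdd : ∀ a : C, d (d a) = 0)
    (hleibniz : ∀ (i : ℤ), ∀ a ∈ 𝒜 i, ∀ b : C,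
      d (a * b) = d a * b + (((-1 : ℤˣ) ^ i : ℤˣ) : ℤ) • (a * d b))
    (n : ℕ)
    (hex : ∀ f : ℕ → C, (∀ i, f i ∈ 𝒜 1 ∧ d (f i) = 0) →
      ∃ c : ℕ → ℕ → C, (∀ i j, c i j ∈ 𝒜 1) ∧
        (∀ i, 1 ≤ i → i ≤ n → c i i = f i) ∧ IsDefiningSystem (⇑d) n c) :
    ∀ k : ℕ, 1 ≤ k → k < n →
      ∀ f : ℕ → C, (∀ i, f i ∈ 𝒜 1 ∧ d (f i) = 0) →
        ∃ c : ℕ → ℕ → C, (∀ i j, c i j ∈ 𝒜 1) ∧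
          (∀ i, 1 ≤ i → i ≤ k → c i i = f i) ∧ IsDefiningSystem (⇑d) k c ∧
          ∃ b ∈ 𝒜 1, -∑ r ∈ Finset.Ico 1 k, c 1 r * c (r + 1) k = d b := by
  intro k hk1 hkn f hf
  obtain ⟨c, hc1, hcd, hds⟩ := hex f hf
  refine ⟨c, hc1, fun i hi hik => hcd i hi (hik.trans hkn.le), ?_, c 1 k, hc1 1 k, ?_⟩
  · intro i j hi hij hjk _
    exact hds i j hi hij (hjk.trans hkn.le) (fun h => (hjk.trans_lt hkn).ne (h.2))
  · exact (hds 1 k le_rfl hk1 hkn.le (fun h => hkn.ne h.2)).symm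
end

section
/- Suppose that in a DGA C• every n-tuple of 1-cocycles admits a defining system of size n. Then for any two defining systems (c_{ij}) and (c'_{ij}) of size n with [c_{ii}] = [c'_{ii}] for i = 1,…,n, one has [c̃_{1n}] = [c̃'_{1n}] in H²; consequently the n-fold Massey product ⟨[c₁],…,[c_n]⟩ := [c̃_{1n}] is a well-defined map (H¹)ⁿ → H². -/
set_option linter.unusedSectionVars false

section MasseyAuxSection
namespace Stmt18Aux

section
variable {R : Type*} [CommRing R] {C : Type*} [Ring C] [Algebra R C]
variable {𝒜 : ℤ → Submodule R C} [GradedAlgebra 𝒜] {d : C →ₗ[R] C}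

def tld (m : ℕ) (t : ℕ → ℕ → C) : C := -∑ r ∈ Finset.Ico 1 m, t 1 r * t (r + 1) m

theorem leib1 (hleibniz : ∀ (i : ℤ), ∀ a ∈ 𝒜 i, ∀ b : C,
      d (a * b) = d a * b + (((-1 : ℤˣ) ^ i : ℤˣ) : ℤ) • (a * d b))
    {a : C} (ha : a ∈ 𝒜 1) (b : C) : d (a * b) = d a * b - a * d b := by
  have := hleibniz 1 a ha b
  simpa [sub_eq_add_neg] using this

theorem leib0 (hleibniz : ∀ (i : ℤ), ∀ a ∈ 𝒜 i, ∀ b : C,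
      d (a * b) = d a * b + (((-1 : ℤˣ) ^ i : ℤˣ) : ℤ) • (a * d b))
    {a : C} (ha : a ∈ 𝒜 0) (b : C) : d (a * b) = d a * b + a * d b := by
  have := hleibniz 0 a ha b
  simpa using this

theorem mem01 {a b : C} (ha : a ∈ 𝒜 0) (hb : b ∈ 𝒜 1) : a * b ∈ 𝒜 1 := by
  simpa using SetLike.mul_mem_graded ha hb

theorem mem10 {a b : C} (ha : a ∈ 𝒜 1) (hb : b ∈ 𝒜 0) : a * b ∈ 𝒜 1 := by
  simpa using SetLike.mul_mem_graded ha hb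

theorem sum_Ico_shift {M : Type*} [AddCommMonoid M] (f : ℕ → M) (a b k : ℕ) :
    ∑ r ∈ Finset.Ico (a + k) (b + k), f r = ∑ r ∈ Finset.Ico a b, f (r + k) := by
  rw [← Finset.map_add_right_Ico, Finset.sum_map]
  rfl


def gauge (t : ℕ → ℕ → C) (i0 : ℕ) (h dh : C) : ℕ → ℕ → C := fun p q =>
  if p = i0 + 1 ∧ q = i0 + 1 then t p q + dh
  else if q = i0 + 1 ∧ p ≤ i0 then t p q + t p i0 * h
  else if p = i0 + 1 ∧ i0 + 1 < q then t p q - h * t (i0 + 2) q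
  else t p q

variable {t : ℕ → ℕ → C} {i0 : ℕ} {h dh : C}

theorem gauge_diag : gauge t i0 h dh (i0+1) (i0+1) = t (i0+1) (i0+1) + dh := by
  unfold gauge; rw [if_pos ⟨rfl, rfl⟩]

theorem gauge_col {p : ℕ} (hp : p ≤ i0) :
    gauge t i0 h dh p (i0+1) = t p (i0+1) + t p i0 * h := by
  unfold gauge; rw [if_neg (by omega), if_pos ⟨rfl, hp⟩]

theorem gauge_row {q : ℕ} (hq : i0+1 < q) :
    gauge t i0 h dh (i0+1) q = t (i0+1) q - h * t (i0+2) q := by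
  unfold gauge; rw [if_neg (by omega), if_neg (by omega), if_pos ⟨rfl, hq⟩]

theorem gauge_gen {p q : ℕ} (hp : p ≠ i0+1) (hq : q ≠ i0+1) :
    gauge t i0 h dh p q = t p q := by
  unfold gauge; rw [if_neg (by omega), if_neg (by omega), if_neg (by omega)]

theorem dmove
    (hd : ∀ (i : ℤ), ∀ a ∈ 𝒜 i, d a ∈ 𝒜 (i + 1))
    (hdd : ∀ a : C, d (d a) = 0)
    (hleibniz : ∀ (i : ℤ), ∀ a ∈ 𝒜 i, ∀ b : C,
      d (a * b) = d a * b + (((-1 : ℤˣ) ^ i : ℤˣ) : ℤ) • (a * d b))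
    (m i0 : ℕ) (hm : 2 ≤ m) (him : i0 + 1 ≤ m)
    (t : ℕ → ℕ → C) (tmem : ∀ p q, t p q ∈ 𝒜 1)
    (tsys : IsDefiningSystem (⇑d) m t)
    (h : C) (hh : h ∈ 𝒜 0) :
    ∃ t' : ℕ → ℕ → C, (∀ p q, t' p q ∈ 𝒜 1) ∧ IsDefiningSystem (⇑d) m t' ∧
      (∀ p, p ≠ i0 + 1 → t' p p = t p p) ∧ t' (i0+1) (i0+1) = t (i0+1) (i0+1) + d h ∧
      ∃ b ∈ 𝒜 1, tld m t' - tld m t = d b := by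
  classical
  set t' : ℕ → ℕ → C := gauge t i0 h (d h) with ht'
  have e_diag : t' (i0+1) (i0+1) = t (i0+1) (i0+1) + d h := gauge_diag
  have e_col : ∀ p, p ≤ i0 → t' p (i0+1) = t p (i0+1) + t p i0 * h :=
    fun p hp => gauge_col hp
  have e_row : ∀ q, i0+1 < q → t' (i0+1) q = t (i0+1) q - h * t (i0+2) q :=
    fun q hq => gauge_row hq
  have e_gen : ∀ p q, p ≠ i0+1 → q ≠ i0+1 → t' p q = t p q :=
    fun p q hp hq => gauge_gen hp hq
  have t'mem : ∀ p q, t' p q ∈ 𝒜 1 := by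
    intro p q
    simp only [ht']
    unfold gauge
    split_ifs
    · exact add_mem (tmem p q) (by simpa using hd 0 h hh)
    · exact add_mem (tmem p q) (mem10 (tmem p i0) hh)
    · exact sub_mem (tmem p q) (mem01 hh (tmem (i0+2) q))
    · exact tmem p q
  -- the crossing sum identity
  have keyX : ∀ p q, p ≤ i0 → i0 + 1 < q →
      (∑ r ∈ Finset.Ico p q, t' p r * t' (r+1) q) =
        ∑ r ∈ Finset.Ico p q, t p r * t (r+1) q := by
    intro p q hp0 hq
    have hs : ∀ r ∈ Finset.Ico p q, t' p r * t' (r+1) q =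
        t p r * t (r+1) q +
          ((if r = i0+1 then t p i0 * (h * t (i0+2) q) else 0) -
           (if r = i0 then t p i0 * (h * t (i0+2) q) else 0)) := by
      intro r hr
      simp only [Finset.mem_Ico] at hr
      by_cases h1 : r = i0 + 1
      · rw [if_pos h1, if_neg (by omega), h1, e_col p hp0, e_gen (i0+2) q (by omega) (by omega),
          add_mul, mul_assoc, sub_zero]
      · by_cases h2 : r = i0
        · rw [if_neg (by omega), if_pos h2, h2, e_gen p i0 (by omega) (by omega),
            e_row q hq, mul_sub]
          abel
        · rw [if_neg h1, if_neg h2, e_gen p r (by omega) h1, e_gen (r+1) q (by omega) (by omega),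
            sub_zero, add_zero]
    rw [Finset.sum_congr rfl hs, Finset.sum_add_distrib, Finset.sum_sub_distrib,
      Finset.sum_ite_eq', Finset.sum_ite_eq', if_pos (by simp only [Finset.mem_Ico]; omega),
      if_pos (by simp only [Finset.mem_Ico]; omega), sub_self, add_zero]
  -- the column sum identity (q = i0+1, p ≤ i0)
  have keyC : ∀ p, 1 ≤ p → p ≤ i0 →
      (∑ r ∈ Finset.Ico p (i0+1), t' p r * t' (r+1) (i0+1)) =
        (∑ r ∈ Finset.Ico p i0, t p r * t (r+1) (i0+1)) +
          ((∑ r ∈ Finset.Ico p i0, t p r * t (r+1) i0) * h +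
            (t p i0 * t (i0+1) (i0+1) + t p i0 * d h)) := by
    intro p hp hp0
    rw [Finset.sum_Ico_succ_top hp0]
    have hs : ∀ r ∈ Finset.Ico p i0, t' p r * t' (r+1) (i0+1) =
        t p r * t (r+1) (i0+1) + (t p r * t (r+1) i0) * h := by
      intro r hr
      simp only [Finset.mem_Ico] at hr
      rw [e_gen p r (by omega) (by omega), e_col (r+1) (by omega), mul_add, mul_assoc]
    rw [Finset.sum_congr rfl hs, Finset.sum_add_distrib, ← Finset.sum_mul,
      e_gen p i0 (by omega) (by omega), e_diag, mul_add]
    abel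
  -- the row sum identity (p = i0+1 < q)
  have keyR : ∀ q, i0 + 1 < q →
      (∑ r ∈ Finset.Ico (i0+1) q, t' (i0+1) r * t' (r+1) q) =
        ((∑ r ∈ Finset.Ico (i0+2) q, t (i0+1) r * t (r+1) q) -
          h * (∑ r ∈ Finset.Ico (i0+2) q, t (i0+2) r * t (r+1) q)) +
          (t (i0+1) (i0+1) * t (i0+2) q + d h * t (i0+2) q) := by
    intro q hq
    rw [Finset.sum_eq_sum_Ico_succ_bot hq]
    have hs : ∀ r ∈ Finset.Ico (i0+2) q, t' (i0+1) r * t' (r+1) q =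
        t (i0+1) r * t (r+1) q - h * (t (i0+2) r * t (r+1) q) := by
      intro r hr
      simp only [Finset.mem_Ico] at hr
      rw [e_row r (by omega), e_gen (r+1) q (by omega) (by omega), sub_mul, mul_assoc]
    rw [Finset.sum_congr rfl hs, Finset.sum_sub_distrib, ← Finset.mul_sum,
      e_diag, e_gen (i0+2) q (by omega) (by omega), add_mul]
    abel
  have t'sys : IsDefiningSystem (⇑d) m t' := by
    intro p q hp hpq hqm hne
    by_cases cq : q < i0 + 1
    · have hs : ∀ r ∈ Finset.Ico p q, t' p r * t' (r+1) q = t p r * t (r+1) q := by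
        intro r hr
        simp only [Finset.mem_Ico] at hr
        rw [e_gen p r (by omega) (by omega), e_gen (r+1) q (by omega) (by omega)]
      rw [e_gen p q (by omega) (by omega), Finset.sum_congr rfl hs]
      exact tsys p q hp hpq hqm hne
    by_cases cp : i0 + 1 < p
    · have hs : ∀ r ∈ Finset.Ico p q, t' p r * t' (r+1) q = t p r * t (r+1) q := by
        intro r hr
        simp only [Finset.mem_Ico] at hr
        rw [e_gen p r (by omega) (by omega), e_gen (r+1) q (by omega) (by omega)]
      rw [e_gen p q (by omega) (by omega), Finset.sum_congr rfl hs]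
      exact tsys p q hp hpq hqm hne
    -- now p ≤ i0+1 ≤ q
    by_cases cd : p = i0 + 1 ∧ q = i0 + 1
    · obtain ⟨rfl, rfl⟩ := cd
      rw [e_diag, map_add, hdd, tsys _ _ hp hpq hqm hne]
      simp
    by_cases ccol : q = i0 + 1
    · subst ccol
      have hp0 : p ≤ i0 := by omega
      rw [e_col p hp0, keyC p hp hp0, map_add,
        leib1 hleibniz (tmem p i0) h, tsys p (i0+1) hp hpq hqm hne,
        tsys p i0 hp (by omega) (by omega) (by omega),
        Finset.sum_Ico_succ_top hp0, neg_mul]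
      abel
    by_cases crow : p = i0 + 1
    · subst crow
      have hq : i0 + 1 < q := by omega
      rw [e_row q hq, keyR q hq, map_sub,
        leib0 hleibniz hh (t (i0+2) q), tsys (i0+1) q hp hpq hqm hne,
        tsys (i0+2) q (by omega) (by omega) hqm (by omega),
        Finset.sum_eq_sum_Ico_succ_bot hq, mul_neg]
      abel
    · have hp0 : p ≤ i0 := by omega
      have hq : i0 + 1 < q := by omega
      rw [e_gen p q (by omega) (by omega), keyX p q hp0 hq]
      exact tsys p q hp hpq hqm hne
  refine ⟨t', t'mem, t'sys, fun p hp => e_gen p p hp hp, e_diag, ?_⟩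
  -- the tilde difference
  by_cases hc1 : 1 ≤ i0 ∧ i0 + 1 < m
  · refine ⟨0, zero_mem _, ?_⟩
    rw [map_zero]
    have : tld m t' = tld m t := by
      unfold tld
      rw [keyX 1 m hc1.1 hc1.2]
    rw [this, sub_self]
  by_cases hc2 : i0 = 0
  · subst hc2
    refine ⟨-(h * t 2 m), neg_mem (mem01 hh (tmem 2 m)), ?_⟩
    have h2m : d (t 2 m) = -∑ r ∈ Finset.Ico 2 m, t 2 r * t (r+1) m :=
      tsys 2 m (by omega) hm le_rfl (by omega)
    unfold tld
    rw [keyR m (by omega), Finset.sum_eq_sum_Ico_succ_bot (show 1 < m by omega),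
      map_neg, leib0 hleibniz hh (t 2 m), h2m]
    simp only [zero_add]
    rw [mul_neg]
    abel
  · -- i0 + 1 = m
    have hc3 : i0 + 1 = m := by omega
    have h1i : 1 ≤ i0 := by omega
    refine ⟨t 1 i0 * h, mem10 (tmem 1 i0) hh, ?_⟩
    have h1i0 : d (t 1 i0) = -∑ r ∈ Finset.Ico 1 i0, t 1 r * t (r+1) i0 :=
      tsys 1 i0 le_rfl h1i (by omega) (by omega)
    unfold tld
    subst hc3
    rw [keyC 1 le_rfl h1i, Finset.sum_Ico_succ_top h1i,
      leib1 hleibniz (tmem 1 i0) h, h1i0, neg_mul]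
    abel

theorem sum_Ico_shift' {M : Type*} [AddCommMonoid M] (f : ℕ → M) (a b k : ℕ) :
    ∑ r ∈ Finset.Ico (k + a) (k + b), f r = ∑ r ∈ Finset.Ico a b, f (k + r) := by
  rw [Nat.add_comm k a, Nat.add_comm k b, sum_Ico_shift]
  exact Finset.sum_congr rfl fun r _ => by rw [Nat.add_comm]

theorem smove
    (m i j : ℕ) (hm : 2 ≤ m) (hi : 1 ≤ i) (hij : i < j) (hjm : j ≤ m)
    (hne : ¬(i = 1 ∧ j = m))
    (t : ℕ → ℕ → C) (tmem : ∀ p q, t p q ∈ 𝒜 1) (tsys : IsDefiningSystem (⇑d) m t)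
    (z : C) (hz1 : z ∈ 𝒜 1) (hz0 : d z = 0)
    (HV : ∀ K (u : ℕ → ℕ → C), 2 ≤ K → K + 1 ≤ m → (∀ p q, u p q ∈ 𝒜 1) →
      IsDefiningSystem (⇑d) K u → ∃ b ∈ 𝒜 1, tld K u = d b) :
    ∃ t' : ℕ → ℕ → C, (∀ p q, t' p q ∈ 𝒜 1) ∧ IsDefiningSystem (⇑d) m t' ∧
      t' i j = t i j - z ∧
      (∀ p q, ¬(p ≤ i ∧ j ≤ q) → t' p q = t p q) ∧
      ∃ b ∈ 𝒜 1, tld m t' - tld m t = d b := by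
  classical
  -- Step A : construct the correction family δ
  have main : ∀ N : ℕ, ∃ δ : ℕ → ℕ → C,
      (∀ p q, δ p q ∈ 𝒜 1) ∧
      (∀ p q, ¬(1 ≤ p ∧ p ≤ i ∧ j ≤ q ∧ q ≤ m) → δ p q = 0) ∧
      δ i j = -z ∧
      (∀ p q, 1 ≤ p → p ≤ i → j ≤ q → q ≤ m → ¬(p = i ∧ q = j) → (i - p) + (q - j) ≤ N →
        d (δ p q) = -(∑ r ∈ Finset.Ico j q, δ p r * t (r+1) q)
          - ∑ r ∈ Finset.Ico p i, t p r * δ (r+1) q) := by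
    intro N
    induction N with
    | zero =>
      refine ⟨fun p q => if p = i ∧ q = j then -z else 0, ?_, ?_, ?_, ?_⟩
      · intro p q
        show (if p = i ∧ q = j then -z else (0:C)) ∈ 𝒜 1
        by_cases hc : p = i ∧ q = j
        · rw [if_pos hc]; exact neg_mem hz1
        · rw [if_neg hc]; exact zero_mem _
      · intro p q hpq
        show (if p = i ∧ q = j then -z else (0:C)) = 0
        rw [if_neg (by omega)]
      · show (if i = i ∧ j = j then -z else (0:C)) = -z
        rw [if_pos ⟨rfl, rfl⟩]
      · intro p q h1 h2 h3 h4 h5 h6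
        exact absurd (by omega : p = i ∧ q = j) h5
    | succ N IH =>
      obtain ⟨δ, δmem, δsupp, δij, δeq⟩ := IH
      -- primitive existence via collapsed defining system
      have prim : ∀ p q, 1 ≤ p → p ≤ i → j ≤ q → q ≤ m → ¬(p = i ∧ q = j) →
          (i - p) + (q - j) ≤ N + 1 →
          ∃ w ∈ 𝒜 1, d w = -(∑ r ∈ Finset.Ico j q, δ p r * t (r+1) q)
            - ∑ r ∈ Finset.Ico p i, t p r * δ (r+1) q := by
        intro p q hp1 hpi hjq hqm hnepq hlev
        obtain ⟨a, ha⟩ : ∃ a, i = p + a := ⟨i - p, by omega⟩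
        obtain ⟨b, hb⟩ : ∃ b, q = j + b := ⟨q - j, by omega⟩
        obtain ⟨p0, hp0⟩ : ∃ p0, p = p0 + 1 := ⟨p - 1, by omega⟩
        obtain ⟨j1, hj1⟩ : ∃ j1, j = j1 + (a + 1) := ⟨j - (a+1), by omega⟩
        set K := a + b + 1 with hK
        set u : ℕ → ℕ → C := fun s s' =>
          if s ≤ a + 1 ∧ a + 1 ≤ s' then -δ (p0 + s) (j1 + s')
          else if s' ≤ a then t (p0 + s) (p0 + s') else t (j1 + s) (j1 + s') with hu
        have u_lo : ∀ s s', s' ≤ a → u s s' = t (p0+s) (p0+s') := by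
          intro s s' hs'
          show (if s ≤ a + 1 ∧ a + 1 ≤ s' then -δ (p0 + s) (j1 + s')
            else if s' ≤ a then t (p0 + s) (p0 + s') else t (j1 + s) (j1 + s')) = _
          rw [if_neg (by omega), if_pos hs']
        have u_hi : ∀ s s', s ≤ s' → a+1 < s → u s s' = t (j1+s) (j1+s') := by
          intro s s' hss hs
          show (if s ≤ a + 1 ∧ a + 1 ≤ s' then -δ (p0 + s) (j1 + s')
            else if s' ≤ a then t (p0 + s) (p0 + s') else t (j1 + s) (j1 + s')) = _
          rw [if_neg (by omega), if_neg (by omega)]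
        have u_cr : ∀ s s', s ≤ a+1 → a+1 ≤ s' → u s s' = -δ (p0+s) (j1+s') := by
          intro s s' h1 h2
          show (if s ≤ a + 1 ∧ a + 1 ≤ s' then -δ (p0 + s) (j1 + s')
            else if s' ≤ a then t (p0 + s) (p0 + s') else t (j1 + s) (j1 + s')) = _
          rw [if_pos ⟨h1, h2⟩]
        have umem : ∀ s s', u s s' ∈ 𝒜 1 := by
          intro s s'
          show (if s ≤ a + 1 ∧ a + 1 ≤ s' then -δ (p0 + s) (j1 + s')
            else if s' ≤ a then t (p0 + s) (p0 + s') else t (j1 + s) (j1 + s')) ∈ 𝒜 1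
          split_ifs
          exacts [neg_mem (δmem _ _), tmem _ _, tmem _ _]
        -- crossing sums
        have cross : ∀ s s', 1 ≤ s → s ≤ a+1 → a+1 ≤ s' →
            ∑ r ∈ Finset.Ico s s', u s r * u (r+1) s' =
              -(∑ r ∈ Finset.Ico (p0+s) i, t (p0+s) r * δ (r+1) (j1+s'))
              + -(∑ r ∈ Finset.Ico j (j1+s'), δ (p0+s) r * t (r+1) (j1+s')) := by
          intro s s' hs1 hsa has'
          rw [← Finset.sum_Ico_consecutive (fun r => u s r * u (r+1) s') hsa has']
          have part1 : ∑ r ∈ Finset.Ico s (a+1), u s r * u (r+1) s' =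
              -∑ r ∈ Finset.Ico (p0+s) i, t (p0+s) r * δ (r+1) (j1+s') := by
            have hi' : i = p0 + (a+1) := by omega
            rw [hi', sum_Ico_shift', ← Finset.sum_neg_distrib]
            refine Finset.sum_congr rfl fun r hr => ?_
            simp only [Finset.mem_Ico] at hr
            rw [u_lo s r (by omega), u_cr (r+1) s' (by omega) has', mul_neg,
              Nat.add_assoc]
          have part2 : ∑ r ∈ Finset.Ico (a+1) s', u s r * u (r+1) s' =
              -∑ r ∈ Finset.Ico j (j1+s'), δ (p0+s) r * t (r+1) (j1+s') := by
            have hj' : j = j1 + (a+1) := by omega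
            rw [hj', sum_Ico_shift', ← Finset.sum_neg_distrib]
            refine Finset.sum_congr rfl fun r hr => ?_
            simp only [Finset.mem_Ico] at hr
            rw [u_cr s r hsa (by omega), u_hi (r+1) s' (by omega) (by omega), neg_mul,
              Nat.add_assoc]
          rw [part1, part2]
        -- u is a defining system of size K
        have usys : IsDefiningSystem (⇑d) K u := by
          intro s s' hs1 hss hsK hneK
          by_cases c1 : s' ≤ a
          · rw [u_lo s s' c1,
              tsys (p0+s) (p0+s') (by omega) (by omega) (by omega) (by omega)]
            rw [sum_Ico_shift']
            congr 1
            exact Finset.sum_congr rfl fun r hr => by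
              simp only [Finset.mem_Ico] at hr
              rw [u_lo s r (by omega), u_lo (r+1) s' c1, Nat.add_assoc]
          by_cases c2 : a + 1 < s
          · rw [u_hi s s' hss c2,
              tsys (j1+s) (j1+s') (by omega) (by omega) (by omega) (by omega)]
            rw [sum_Ico_shift']
            congr 1
            exact Finset.sum_congr rfl fun r hr => by
              simp only [Finset.mem_Ico] at hr
              rw [u_hi s r (by omega) c2, u_hi (r+1) s' (by omega) (by omega), Nat.add_assoc]
          -- crossing
          have hsa : s ≤ a + 1 := by omega
          have has' : a + 1 ≤ s' := by omega
          rw [u_cr s s' hsa has']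
          by_cases cd : s = a+1 ∧ s' = a+1
          · obtain ⟨rfl, rfl⟩ := cd
            rw [show p0 + (a+1) = i from by omega, show j1 + (a+1) = j from by omega,
              δij, neg_neg, hz0, Finset.Ico_self, Finset.sum_empty, neg_zero]
          · have hlev' : (i - (p0+s)) + ((j1+s') - j) ≤ N := by omega
            rw [map_neg, δeq (p0+s) (j1+s') (by omega) (by omega) (by omega) (by omega)
              (by omega) hlev', cross s s' hs1 hsa has']
            abel
        -- apply the vanishing oracle
        obtain ⟨bu, bumem, hbu⟩ := HV K u (by omega) (by omega) umem usys
        refine ⟨-bu, neg_mem bumem, ?_⟩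
        rw [map_neg, ← hbu]
        have c2 := cross 1 K le_rfl (by omega) (by omega)
        rw [show p0 + 1 = p from by omega, show j1 + K = q from by omega] at c2
        unfold tld
        rw [c2]
        abel
      -- choose the new family
      have H : ∀ p q, ∃ w : C,
          ((1 ≤ p ∧ p ≤ i ∧ j ≤ q ∧ q ≤ m ∧ ¬(p = i ∧ q = j) ∧ (i-p)+(q-j) = N+1) →
            (w ∈ 𝒜 1 ∧ d w = -(∑ r ∈ Finset.Ico j q, δ p r * t (r+1) q)
              - ∑ r ∈ Finset.Ico p i, t p r * δ (r+1) q)) ∧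
          (¬(1 ≤ p ∧ p ≤ i ∧ j ≤ q ∧ q ≤ m ∧ ¬(p = i ∧ q = j) ∧ (i-p)+(q-j) = N+1) →
            w = δ p q) := by
        intro p q
        by_cases hc : 1 ≤ p ∧ p ≤ i ∧ j ≤ q ∧ q ≤ m ∧ ¬(p = i ∧ q = j) ∧ (i-p)+(q-j) = N+1
        · obtain ⟨w, hw1, hw2⟩ := prim p q hc.1 hc.2.1 hc.2.2.1 hc.2.2.2.1 hc.2.2.2.2.1
            (le_of_eq hc.2.2.2.2.2)
          exact ⟨w, fun _ => ⟨hw1, hw2⟩, fun h => absurd hc h⟩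
        · exact ⟨δ p q, fun h => absurd h hc, fun _ => rfl⟩
      choose F hF1 hF2 using H
      refine ⟨F, ?_, ?_, ?_, ?_⟩
      · intro p q
        by_cases hc : 1 ≤ p ∧ p ≤ i ∧ j ≤ q ∧ q ≤ m ∧ ¬(p = i ∧ q = j) ∧ (i-p)+(q-j) = N+1
        · exact (hF1 p q hc).1
        · rw [hF2 p q hc]; exact δmem p q
      · intro p q hpq
        rw [hF2 p q (fun hc => hpq ⟨hc.1, hc.2.1, hc.2.2.1, hc.2.2.2.1⟩)]
        exact δsupp p q hpq
      · rw [hF2 i j (fun hc => hc.2.2.2.2.1 ⟨rfl, rfl⟩)]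
        exact δij
      · intro p q h1 h2 h3 h4 h5 h6
        have erepl1 : ∀ r ∈ Finset.Ico j q, F p r * t (r+1) q = δ p r * t (r+1) q := by
          intro r hr
          simp only [Finset.mem_Ico] at hr
          rw [hF2 p r (fun hc => absurd hc.2.2.2.2.2 (by omega))]
        have erepl2 : ∀ r ∈ Finset.Ico p i, t p r * F (r+1) q = t p r * δ (r+1) q := by
          intro r hr
          simp only [Finset.mem_Ico] at hr
          rw [hF2 (r+1) q (fun hc => absurd hc.2.2.2.2.2 (by omega))]
        by_cases hN : (i-p)+(q-j) = N+1
        · rw [(hF1 p q ⟨h1,h2,h3,h4,h5,hN⟩).2, Finset.sum_congr rfl erepl1,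
            Finset.sum_congr rfl erepl2]
        · rw [hF2 p q (fun hc => absurd hc.2.2.2.2.2 hN),
            δeq p q h1 h2 h3 h4 h5 (by omega), Finset.sum_congr rfl erepl1,
            Finset.sum_congr rfl erepl2]
  -- Step B : assemble the new defining system
  obtain ⟨δ, δmem, δsupp, δij, δeq'⟩ := main (i + m)
  have δeq : ∀ p q, 1 ≤ p → p ≤ i → j ≤ q → q ≤ m → ¬(p = i ∧ q = j) →
      d (δ p q) = -(∑ r ∈ Finset.Ico j q, δ p r * t (r+1) q)
        - ∑ r ∈ Finset.Ico p i, t p r * δ (r+1) q :=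
    fun p q h1 h2 h3 h4 h5 => δeq' p q h1 h2 h3 h4 h5 (by omega)
  set t' : ℕ → ℕ → C := fun p q => t p q + δ p q with ht'
  have t'app : ∀ p q, t' p q = t p q + δ p q := fun _ _ => rfl
  have key : ∀ p q, 1 ≤ p → p ≤ i → j ≤ q → q ≤ m →
      ∑ r ∈ Finset.Ico p q, t' p r * t' (r+1) q =
        (∑ r ∈ Finset.Ico p q, t p r * t (r+1) q) +
        ((∑ r ∈ Finset.Ico j q, δ p r * t (r+1) q) +
          ∑ r ∈ Finset.Ico p i, t p r * δ (r+1) q) := by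
    intro p q hp1 hpi hjq hqm'
    have expand : ∀ r ∈ Finset.Ico p q, t' p r * t' (r+1) q =
        t p r * t (r+1) q + (δ p r * t (r+1) q +
          (t p r * δ (r+1) q + δ p r * δ (r+1) q)) := by
      intro r hr
      rw [t'app, t'app, add_mul, mul_add, mul_add]
      abel
    rw [Finset.sum_congr rfl expand, Finset.sum_add_distrib, Finset.sum_add_distrib,
      Finset.sum_add_distrib]
    have h1 : ∑ r ∈ Finset.Ico p q, δ p r * t (r+1) q
        = ∑ r ∈ Finset.Ico j q, δ p r * t (r+1) q := by
      refine (Finset.sum_subset (Finset.Ico_subset_Ico (by omega) le_rfl) ?_).symm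
      intro r hr hr'
      simp only [Finset.mem_Ico] at hr hr'
      rw [δsupp p r (by omega), zero_mul]
    have h2 : ∑ r ∈ Finset.Ico p q, t p r * δ (r+1) q
        = ∑ r ∈ Finset.Ico p i, t p r * δ (r+1) q := by
      refine (Finset.sum_subset (Finset.Ico_subset_Ico le_rfl (by omega)) ?_).symm
      intro r hr hr'
      simp only [Finset.mem_Ico] at hr hr'
      rw [δsupp (r+1) q (by omega), mul_zero]
    have h3 : ∑ r ∈ Finset.Ico p q, δ p r * δ (r+1) q = 0 := by
      refine Finset.sum_eq_zero fun r hr => ?_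
      simp only [Finset.mem_Ico] at hr
      by_cases hrj : r < j
      · rw [δsupp p r (by omega), zero_mul]
      · rw [δsupp (r+1) q (by omega), mul_zero]
    rw [h1, h2, h3, add_zero]
  have t'sys : IsDefiningSystem (⇑d) m t' := by
    intro p q hp hpq hqm' hne'
    by_cases hsup : p ≤ i ∧ j ≤ q
    · by_cases hc : p = i ∧ q = j
      · have e1 : t' p q = t p q - z := by
          rw [t'app, hc.1, hc.2, δij, ← sub_eq_add_neg]
        rw [e1, map_sub, hz0, sub_zero, tsys p q hp hpq hqm' hne',
          key p q hp hsup.1 hsup.2 hqm',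
          show (∑ r ∈ Finset.Ico j q, δ p r * t (r+1) q) = 0 from by
            rw [hc.2, Finset.Ico_self, Finset.sum_empty],
          show (∑ r ∈ Finset.Ico p i, t p r * δ (r+1) q) = 0 from by
            rw [hc.1, Finset.Ico_self, Finset.sum_empty],
          add_zero, add_zero]
      · rw [t'app, map_add, tsys p q hp hpq hqm' hne',
          δeq p q hp hsup.1 hsup.2 hqm' hc, key p q hp hsup.1 hsup.2 hqm']
        abel
    · have e0 : ∀ p' q', p ≤ p' → q' ≤ q → p' ≤ q' → t' p' q' = t p' q' := by
        intro p' q' h1 h2 h3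
        rw [t'app, δsupp p' q' (by omega), add_zero]
      rw [e0 p q le_rfl le_rfl hpq, tsys p q hp hpq hqm' hne']
      congr 1
      refine Finset.sum_congr rfl fun r hr => ?_
      simp only [Finset.mem_Ico] at hr
      rw [e0 p r le_rfl (by omega) (by omega), e0 (r+1) q (by omega) le_rfl (by omega)]
  refine ⟨t', fun p q => add_mem (tmem p q) (δmem p q), t'sys, ?_, ?_, δ 1 m, δmem 1 m, ?_⟩
  · rw [t'app, δij, ← sub_eq_add_neg]
  · intro p q hpq
    rw [t'app, δsupp p q (by omega), add_zero]
  · rw [δeq 1 m le_rfl hi hjm le_rfl (by omega)]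
    unfold tld
    rw [key 1 m le_rfl hi hjm le_rfl]
    abel

theorem Ulem
    (hd : ∀ (k : ℤ), ∀ a ∈ 𝒜 k, d a ∈ 𝒜 (k + 1))
    (hdd : ∀ a : C, d (d a) = 0)
    (hleibniz : ∀ (k : ℤ), ∀ a ∈ 𝒜 k, ∀ b : C,
      d (a * b) = d a * b + (((-1 : ℤˣ) ^ k : ℤˣ) : ℤ) • (a * d b))
    (n : ℕ) (hn : 2 ≤ n)
    (hex : ∀ f : ℕ → C, (∀ k, f k ∈ 𝒜 1 ∧ d (f k) = 0) →
      ∃ c : ℕ → ℕ → C, (∀ p q, c p q ∈ 𝒜 1) ∧ (∀ p, 1 ≤ p → p ≤ n → c p p = f p) ∧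
        IsDefiningSystem (⇑d) n c) :
    ∀ m, 2 ≤ m → m ≤ n → ∀ t t' : ℕ → ℕ → C, (∀ p q, t p q ∈ 𝒜 1) → (∀ p q, t' p q ∈ 𝒜 1) →
      IsDefiningSystem (⇑d) m t → IsDefiningSystem (⇑d) m t' →
      (∀ p, 1 ≤ p → p ≤ m → ∃ b ∈ 𝒜 0, t' p p - t p p = d b) →
      ∃ b ∈ 𝒜 1, tld m t' - tld m t = d b := by
  intro m
  induction m using Nat.strong_induction_on with
  | _ m IHm =>
  intro hm2 hmn t t' tmem t'mem tsys t'sys hdg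
  -- the vanishing oracle for strictly smaller sizes
  have HV : ∀ K (u : ℕ → ℕ → C), 2 ≤ K → K + 1 ≤ m → (∀ p q, u p q ∈ 𝒜 1) →
      IsDefiningSystem (⇑d) K u → ∃ b ∈ 𝒜 1, tld K u = d b := by
    intro K u hK2 hKm umem usys
    have hf : ∀ k, (if 1 ≤ k ∧ k ≤ K then u k k else 0) ∈ 𝒜 1 ∧
        d (if 1 ≤ k ∧ k ≤ K then u k k else 0) = 0 := by
      intro k
      by_cases hk : 1 ≤ k ∧ k ≤ K
      · rw [if_pos hk]
        refine ⟨umem k k, ?_⟩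
        rw [usys k k hk.1 le_rfl hk.2 (by omega), Finset.Ico_self, Finset.sum_empty, neg_zero]
      · rw [if_neg hk]; exact ⟨zero_mem _, map_zero d⟩
    obtain ⟨cc, ccmem, ccdiag, ccsys⟩ := hex _ hf
    have ccK : IsDefiningSystem (⇑d) K cc := fun s s' h1 h2 h3 _ =>
      ccsys s s' h1 h2 (by omega) (by omega)
    have hdg0 : ∀ p, 1 ≤ p → p ≤ K → ∃ b ∈ 𝒜 0, cc p p - u p p = d b := by
      intro p h1 h2
      refine ⟨0, zero_mem _, ?_⟩
      rw [ccdiag p h1 (by omega), if_pos ⟨h1, h2⟩, sub_self, map_zero]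
    obtain ⟨b1, b1mem, hb1⟩ := IHm K (by omega) hK2 (by omega) u cc umem ccmem usys ccK hdg0
    refine ⟨cc 1 K - b1, sub_mem (ccmem 1 K) b1mem, ?_⟩
    have e1K : tld K cc = d (cc 1 K) := by
      unfold tld
      rw [ccsys 1 K le_rfl (by omega) (by omega) (by omega)]
    rw [map_sub, ← e1K, ← hb1]
    abel
  -- Phase 1 : adjust the diagonal
  have P1 : ∀ k, k ≤ m → ∃ t0 : ℕ → ℕ → C, (∀ p q, t0 p q ∈ 𝒜 1) ∧
      IsDefiningSystem (⇑d) m t0 ∧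
      (∀ p, 1 ≤ p → p ≤ k → t0 p p = t p p) ∧ (∀ p, k < p → t0 p p = t' p p) ∧
      ∃ b ∈ 𝒜 1, tld m t0 - tld m t' = d b := by
    intro k
    induction k with
    | zero => exact fun _ => ⟨t', t'mem, t'sys, fun p h1 h2 => absurd h2 (by omega),
        fun p _ => rfl, 0, zero_mem _, by rw [sub_self, map_zero]⟩
    | succ k IHk =>
      intro hk
      obtain ⟨t0, t0mem, t0sys, t0lo, t0hi, b0, b0mem, hb0⟩ := IHk (by omega)
      obtain ⟨bb, bbmem, hbb⟩ := hdg (k+1) (by omega) (by omega)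
      obtain ⟨t1, t1mem, t1sys, t1off, t1diag, b1, b1mem, hb1⟩ :=
        dmove hd hdd hleibniz m k hm2 (by omega) t0 t0mem t0sys (-bb) (neg_mem bbmem)
      refine ⟨t1, t1mem, t1sys, ?_, ?_, b0 + b1, add_mem b0mem b1mem, ?_⟩
      · intro p h1 h2
        by_cases hpk : p = k + 1
        · subst hpk
          rw [t1diag, t0hi (k+1) (by omega), map_neg, ← hbb]
          abel
        · rw [t1off p hpk, t0lo p h1 (by omega)]
      · intro p hp
        rw [t1off p (by omega), t0hi p (by omega)]
      · rw [map_add, ← hb0, ← hb1]; abel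
  obtain ⟨t0, t0mem, t0sys, t0diag, _, b0, b0mem, hb0⟩ := P1 m le_rfl
  -- Phase 2 : match all proper entries, length by length
  have P2 : ∀ L, ∃ t1 : ℕ → ℕ → C, (∀ p q, t1 p q ∈ 𝒜 1) ∧
      IsDefiningSystem (⇑d) m t1 ∧
      (∀ p q, 1 ≤ p → p ≤ q → q ≤ m → q - p ≤ L → q - p ≤ m - 2 → t1 p q = t p q) ∧
      ∃ b ∈ 𝒜 1, tld m t1 - tld m t0 = d b := by
    intro L
    induction L with
    | zero =>
      refine ⟨t0, t0mem, t0sys, ?_, 0, zero_mem _, by rw [sub_self, map_zero]⟩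
      intro p q h1 h2 h3 h4 _
      have hpq : p = q := by omega
      subst hpq
      exact t0diag p h1 h3
    | succ L IHL =>
      obtain ⟨t1, t1mem, t1sys, t1eq, b1, b1mem, hb1⟩ := IHL
      by_cases hLm : L + 1 ≤ m - 2
      · -- inner induction over positions of length L+1
        have inner : ∀ k, ∃ t2 : ℕ → ℕ → C, (∀ p q, t2 p q ∈ 𝒜 1) ∧
            IsDefiningSystem (⇑d) m t2 ∧
            (∀ p q, 1 ≤ p → p ≤ q → q ≤ m → q - p ≤ L → q - p ≤ m - 2 → t2 p q = t p q) ∧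
            (∀ p, 1 ≤ p → p ≤ k → p + (L+1) ≤ m → t2 p (p + (L+1)) = t p (p + (L+1))) ∧
            ∃ b ∈ 𝒜 1, tld m t2 - tld m t1 = d b := by
          intro k
          induction k with
          | zero => exact ⟨t1, t1mem, t1sys, t1eq, fun p h1 h2 _ => absurd h2 (by omega),
              0, zero_mem _, by rw [sub_self, map_zero]⟩
          | succ k IHk =>
            obtain ⟨t2, t2mem, t2sys, t2eq, t2done, b2, b2mem, hb2⟩ := IHk
            by_cases hkL : k + 1 + (L+1) ≤ m
            · have hzc : d (t2 (k+1) (k+1+(L+1)) - t (k+1) (k+1+(L+1))) = 0 := by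
                rw [map_sub,
                  t2sys (k+1) (k+1+(L+1)) (by omega) (by omega) (by omega) (by omega),
                  tsys (k+1) (k+1+(L+1)) (by omega) (by omega) (by omega) (by omega),
                  sub_eq_zero]
                congr 1
                refine Finset.sum_congr rfl fun r hr => ?_
                simp only [Finset.mem_Ico] at hr
                rw [t2eq (k+1) r (by omega) (by omega) (by omega) (by omega) (by omega),
                  t2eq (r+1) (k+1+(L+1)) (by omega) (by omega) (by omega) (by omega) (by omega)]
              obtain ⟨t3, t3mem, t3sys, t3ij, t3off, b3, b3mem, hb3⟩ :=
                smove m (k+1) (k+1+(L+1)) hm2 (by omega) (by omega) (by omega) (by omega)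
                  t2 t2mem t2sys (t2 (k+1) (k+1+(L+1)) - t (k+1) (k+1+(L+1)))
                  (sub_mem (t2mem _ _) (tmem _ _)) hzc HV
              refine ⟨t3, t3mem, t3sys, ?_, ?_, b2 + b3, add_mem b2mem b3mem, ?_⟩
              · intro p q h1 h2 h3 h4 h5
                rw [t3off p q (by omega), t2eq p q h1 h2 h3 h4 h5]
              · intro p h1 h2 h3
                by_cases hpk : p = k+1
                · subst hpk
                  rw [t3ij, sub_sub_cancel]
                · rw [t3off p (p+(L+1)) (by omega), t2done p h1 (by omega) h3]
              · rw [map_add, ← hb2, ← hb3]; abel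
            · refine ⟨t2, t2mem, t2sys, t2eq, ?_, b2, b2mem, hb2⟩
              intro p h1 h2 h3
              exact t2done p h1 (by omega) h3
        obtain ⟨t2, t2mem, t2sys, t2eq, t2done, b2, b2mem, hb2⟩ := inner m
        refine ⟨t2, t2mem, t2sys, ?_, b1 + b2, add_mem b1mem b2mem,
          by rw [map_add, ← hb1, ← hb2]; abel⟩
        intro p q h1 h2 h3 h4 h5
        by_cases hq : q - p ≤ L
        · exact t2eq p q h1 h2 h3 hq h5
        · have hq' : q = p + (L+1) := by omega
          subst hq'
          exact t2done p h1 (by omega) (by omega)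
      · refine ⟨t1, t1mem, t1sys, ?_, b1, b1mem, hb1⟩
        intro p q h1 h2 h3 h4 h5
        exact t1eq p q h1 h2 h3 (by omega) h5
  obtain ⟨t2f, _, _, t2feq, b2f, b2fmem, hb2f⟩ := P2 m
  have teq : tld m t2f = tld m t := by
    unfold tld
    congr 1
    refine Finset.sum_congr rfl fun r hr => ?_
    simp only [Finset.mem_Ico] at hr
    rw [t2feq 1 r le_rfl (by omega) (by omega) (by omega) (by omega),
      t2feq (r+1) m (by omega) (by omega) le_rfl (by omega) (by omega)]
  refine ⟨-(b2f + b0), neg_mem (add_mem b2fmem b0mem), ?_⟩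
  rw [map_neg, map_add, ← hb2f, ← hb0, teq]
  abel

end
end Stmt18Aux
end MasseyAuxSection

set_option maxHeartbeats 1000000 in
/-- uniqueness of Massey products.
Suppose that in a DGA `C •` (a graded `R`-algebra with degree-`+1` differential `d`,
`d ∘ d = 0`, Leibniz rule) every `n`-tuple of 1-cocycles admits a defining system of
size `n`.  Then for any two defining systems `(c_{ij})`, `(c'_{ij})` of size `n`
(consisting of degree-1 elements) with cohomologous diagonals `[c_{ii}] = [c'_{ii}]`
(`i = 1, …, n`), one has `[c̃_{1n}] = [c̃'_{1n}]` in `H²`: the difference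
`c̃'_{1n} − c̃_{1n}` is the coboundary of a degree-1 element.  Consequently the
`n`-fold Massey product `⟨[c₁],…,[c_n]⟩ := [c̃_{1n}]` is a well-defined map
`(H¹)ⁿ → H²`. -/
theorem stmt_18 (R : Type*) [CommRing R] (C : Type*) [Ring C] [Algebra R C]
    (𝒜 : ℤ → Submodule R C) [GradedAlgebra 𝒜]
    (d : C →ₗ[R] C)
    (hd : ∀ (i : ℤ), ∀ a ∈ 𝒜 i, d a ∈ 𝒜 (i + 1))
    (hdd : ∀ a : C, d (d a) = 0)
    (hleibniz : ∀ (i : ℤ), ∀ a ∈ 𝒜 i, ∀ b : C,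
      d (a * b) = d a * b + (((-1 : ℤˣ) ^ i : ℤˣ) : ℤ) • (a * d b))
    (n : ℕ) (hn : 2 ≤ n)
    (hex : ∀ f : ℕ → C, (∀ i, f i ∈ 𝒜 1 ∧ d (f i) = 0) →
      ∃ c : ℕ → ℕ → C, (∀ i j, c i j ∈ 𝒜 1) ∧
        (∀ i, 1 ≤ i → i ≤ n → c i i = f i) ∧ IsDefiningSystem (⇑d) n c)
    (c c' : ℕ → ℕ → C)
    (hmem : ∀ i j, c i j ∈ 𝒜 1) (hmem' : ∀ i j, c' i j ∈ 𝒜 1)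
    (hsys : IsDefiningSystem (⇑d) n c) (hsys' : IsDefiningSystem (⇑d) n c')
    (hdiag : ∀ i, 1 ≤ i → i ≤ n → ∃ b ∈ 𝒜 0, c' i i - c i i = d b) :
    ∃ b ∈ 𝒜 1,
      (-∑ r ∈ Finset.Ico 1 n, c' 1 r * c' (r + 1) n) -
        (-∑ r ∈ Finset.Ico 1 n, c 1 r * c (r + 1) n) = d b := by
  obtain ⟨b, hb, he⟩ := Stmt18Aux.Ulem hd hdd hleibniz n hn hex n hn le_rfl
    c c' hmem hmem' hsys hsys' hdiag
  exact ⟨b, hb, he⟩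
end

section
/- Let G be a group acting trivially on R = ℤ/m, γ̄: G → Ū_{n+1}(R) a homomorphism corresponding to a defining system (c_{ij}) of inhomogeneous 1-cochains, and let B = R × G with product (r,σ)*(s,τ) = (r + s + (−1)^{n−1} c̃_{1n}(σ,τ), στ). Then the map h: U_{n+1}(R) ×_{Ū_{n+1}(R)} G → B, ((a_{ij}), σ) ↦ (a_{1,n+1}, σ), is a group isomorphism commuting with the projections to G; in particular the fiber product U_{n+1}(R) ×_{Ū_{n+1}(R)} G is the central extension of G by R determined by the 2-cocycle (−1)^{n−1} c̃_{1n}. -/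
open Fin.NatCast in
lemma tri_mul_apply' {m n : ℕ} (M N : Matrix (Fin (n+1)) (Fin (n+1)) (ZMod m))
    (hM0 : ∀ i j : Fin (n+1), (j:ℕ) < (i:ℕ) → M i j = 0)
    (hN0 : ∀ i j : Fin (n+1), (j:ℕ) < (i:ℕ) → N i j = 0)
    (i j : Fin (n+1)) :
    (M * N) i j = ∑ k ∈ Finset.Icc (i:ℕ) (j:ℕ),
      M i (k : Fin (n+1)) * N (k : Fin (n+1)) j := by
  rw [Matrix.mul_apply]
  have h1 : ∑ k : Fin (n+1), M i k * N k j
      = ∑ k ∈ Finset.range (n+1), M i (k : Fin (n+1)) * N (k : Fin (n+1)) j := by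
    rw [← Fin.sum_univ_eq_sum_range (fun k => M i (k : Fin (n+1)) * N (k : Fin (n+1)) j) (n+1)]
    simp [Fin.cast_val_eq_self]
  rw [h1]
  symm
  apply Finset.sum_subset
  · intro k hk
    simp only [Finset.mem_Icc] at hk
    exact Finset.mem_range.2 (lt_of_le_of_lt hk.2 j.isLt)
  · intro k hk hk'
    simp only [Finset.mem_range] at hk
    simp only [Finset.mem_Icc, not_and_or, not_le] at hk'
    have hv : ((k : Fin (n+1)) : ℕ) = k := Fin.val_cast_of_lt hk
    rcases hk' with h | h
    · rw [hM0 i _ (by rw [hv]; exact h), zero_mul]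
    · rw [hN0 _ j (by rw [hv]; exact h), mul_zero]



open Fin.NatCast in
/-- Dwyer: central extension attached to a Massey product.
Let `G` be a group acting trivially on `R = ℤ/m`, and let `c : ℕ → ℕ → G → ℤ/m`
(1-based indexing, `1 ≤ i ≤ j ≤ n`) be a defining system of inhomogeneous 1-cochains:
`c_{ij}(σ) + c_{ij}(τ) − c_{ij}(στ) = −∑_{r=i}^{j−1} c_{ir}(σ) c_{r+1,j}(τ)` for
`(i,j) ≠ (1,n)`.  Let `γ̄ : G → Ū_{n+1}(ℤ/m)` be the corresponding map,
`γ̄(σ)_{ij} = (−1)^{j−i} c_{i,j−1}(σ)` (0-based: `(−1)^{j−i} c_{i+1,j}(σ)`), and let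
`B = ℤ/m × G` carry the product
`(r,σ) * (s,τ) = (r + s + (−1)^{n−1} c̃_{1n}(σ,τ), στ)`.  Then the map
`h : U_{n+1}(ℤ/m) ×_{Ū_{n+1}(ℤ/m)} G → B`, `((a_{ij}), σ) ↦ (a_{1,n+1}, σ)`, is a group
isomorphism commuting with the projections to `G`; in particular the fiber product is the
central extension of `G` by `ℤ/m` determined by the 2-cocycle `(−1)^{n−1} c̃_{1n}`.
Concretely: the fiber product is closed under (componentwise) multiplication, the
`(1,n+1)`-entry of a product is given by the `B`-product formula, and `h` is bijective. -/
theorem stmt_19 (G : Type*) [Group G] (m n : ℕ) (hm : 2 ≤ m) (hn : 2 ≤ n)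
    (c : ℕ → ℕ → G → ZMod m)
    (hc : ∀ i j : ℕ, 1 ≤ i → i ≤ j → j ≤ n → ¬(i = 1 ∧ j = n) → ∀ σ τ : G,
      c i j σ + c i j τ - c i j (σ * τ) =
        -∑ r ∈ Finset.Ico i j, c i r σ * c (r + 1) j τ) :
    letI ctilde : G → G → ZMod m := fun σ τ =>
      -∑ r ∈ Finset.Ico 1 n, c 1 r σ * c (r + 1) n τ
    letI γ : G → Matrix (Fin (n + 1)) (Fin (n + 1)) (ZMod m) := fun σ i j =>
      if (i : ℕ) < (j : ℕ) then (-1 : ZMod m) ^ ((j : ℕ) - (i : ℕ)) * c ((i : ℕ) + 1) (j : ℕ) σ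
      else if i = j then 1 else 0
    letI Fib : Set (Matrix (Fin (n + 1)) (Fin (n + 1)) (ZMod m) × G) :=
      {p | (∀ i, p.1 i i = 1) ∧
        (∀ i j : Fin (n + 1), (j : ℕ) < (i : ℕ) → p.1 i j = 0) ∧
        ∀ i j : Fin (n + 1), ¬(i = 0 ∧ j = Fin.last n) → p.1 i j = γ p.2 i j}
    -- the fiber product is closed under multiplication (so it is a group, and the
    -- projection to `G` is a homomorphism)
    (∀ p q : Matrix (Fin (n + 1)) (Fin (n + 1)) (ZMod m) × G,
      p ∈ Fib → q ∈ Fib → (p.1 * q.1, p.2 * q.2) ∈ Fib) ∧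
    -- `h` is multiplicative for the `B`-product `(r,σ)*(s,τ) = (r+s+(−1)^{n−1}c̃(σ,τ), στ)`
    (∀ p q : Matrix (Fin (n + 1)) (Fin (n + 1)) (ZMod m) × G,
      p ∈ Fib → q ∈ Fib →
        (p.1 * q.1) 0 (Fin.last n) =
          p.1 0 (Fin.last n) + q.1 0 (Fin.last n) +
            (-1 : ZMod m) ^ (n - 1) * ctilde p.2 q.2) ∧
    -- `h` is bijective (commuting with the projections to `G`)
    (∀ (σ : G) (x : ZMod m),
      ∃! M : Matrix (Fin (n + 1)) (Fin (n + 1)) (ZMod m),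
        (M, σ) ∈ Fib ∧ M 0 (Fin.last n) = x) := by
  have hn1 : 1 ≤ n := le_trans one_le_two hn
  -- key product formula
  have key : ∀ (M N : Matrix (Fin (n + 1)) (Fin (n + 1)) (ZMod m)) (σ τ : G),
      (∀ i, M i i = 1) → (∀ i j : Fin (n + 1), (j : ℕ) < (i : ℕ) → M i j = 0) →
      (∀ i j : Fin (n + 1), ¬(i = 0 ∧ j = Fin.last n) → M i j =
        (if (i : ℕ) < (j : ℕ) then (-1 : ZMod m) ^ ((j : ℕ) - (i : ℕ)) * c ((i : ℕ) + 1) (j : ℕ) σ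
         else if i = j then 1 else 0)) →
      (∀ i, N i i = 1) → (∀ i j : Fin (n + 1), (j : ℕ) < (i : ℕ) → N i j = 0) →
      (∀ i j : Fin (n + 1), ¬(i = 0 ∧ j = Fin.last n) → N i j =
        (if (i : ℕ) < (j : ℕ) then (-1 : ZMod m) ^ ((j : ℕ) - (i : ℕ)) * c ((i : ℕ) + 1) (j : ℕ) τ
         else if i = j then 1 else 0)) →
      ∀ i j : Fin (n+1), (i:ℕ) < (j:ℕ) →
      (M * N) i j = M i j + N i j +
        (-1:ZMod m)^((j:ℕ)-(i:ℕ)) *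
          ∑ r ∈ Finset.Ico ((i:ℕ)+1) (j:ℕ), c ((i:ℕ)+1) r σ * c (r+1) (j:ℕ) τ := by
    intro M N σ τ hp1 hp0 hpγ hq1 hq0 hqγ i j hij
    rw [tri_mul_apply' M N hp0 hq0 i j]
    rw [← Finset.Ico_add_one_right_eq_Icc,
      Finset.sum_eq_sum_Ico_succ_bot (by omega : (i:ℕ) < (j:ℕ)+1),
      Finset.sum_Ico_succ_top (by omega : (i:ℕ)+1 ≤ (j:ℕ))]
    have hI : (((i:ℕ) : Fin (n+1))) = i := Fin.cast_val_eq_self i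
    have hJ : (((j:ℕ) : Fin (n+1))) = j := Fin.cast_val_eq_self j
    rw [hI, hJ, hp1 i, hq1 j, one_mul, mul_one]
    have hmid : ∑ k ∈ Finset.Ico ((i:ℕ)+1) (j:ℕ), M i (k : Fin (n+1)) * N (k : Fin (n+1)) j
        = (-1:ZMod m)^((j:ℕ)-(i:ℕ)) *
          ∑ r ∈ Finset.Ico ((i:ℕ)+1) (j:ℕ), c ((i:ℕ)+1) r σ * c (r+1) (j:ℕ) τ := by
      rw [Finset.mul_sum]
      apply Finset.sum_congr rfl
      intro k hk
      simp only [Finset.mem_Ico] at hk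
      have hkn : k < n + 1 := by have := j.isLt; omega
      have hv : ((k : Fin (n+1)) : ℕ) = k := Fin.val_cast_of_lt hkn
      have hM : M i (k : Fin (n+1)) = (-1:ZMod m)^(k - (i:ℕ)) * c ((i:ℕ)+1) k σ := by
        rw [hpγ i (k : Fin (n+1)) (by
          rintro ⟨-, hkl⟩
          have : ((k : Fin (n+1)) : ℕ) = n := by rw [hkl]; simp
          have := j.isLt; omega)]
        rw [hv, if_pos (by omega)]
      have hN : N (k : Fin (n+1)) j = (-1:ZMod m)^((j:ℕ) - k) * c (k+1) (j:ℕ) τ := by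
        rw [hqγ (k : Fin (n+1)) j (by
          rintro ⟨hkl, -⟩
          have : ((k : Fin (n+1)) : ℕ) = 0 := by rw [hkl]; simp
          omega)]
        rw [hv, if_pos (by omega)]
      rw [hM, hN]
      have hsub : (k - (i:ℕ)) + ((j:ℕ) - k) = (j:ℕ) - (i:ℕ) := by omega
      rw [show (-1:ZMod m)^((j:ℕ)-(i:ℕ)) = (-1:ZMod m)^(k - (i:ℕ)) * (-1:ZMod m)^((j:ℕ) - k) by
        rw [← pow_add, hsub]]
      ring
    rw [hmid]
    ring
  refine ⟨?_, ?_, ?_⟩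
  · -- closure
    rintro ⟨M, σ⟩ ⟨N, τ⟩ ⟨hp1, hp0, hpγ⟩ ⟨hq1, hq0, hqγ⟩
    dsimp only at hp1 hp0 hpγ hq1 hq0 hqγ
    have hdiag : ∀ i : Fin (n+1), (M * N) i i = 1 := by
      intro i
      rw [tri_mul_apply' M N hp0 hq0 i i, Finset.Icc_self, Finset.sum_singleton,
        Fin.cast_val_eq_self i, hp1 i, hq1 i, one_mul]
    have hlow : ∀ i j : Fin (n+1), (j:ℕ) < (i:ℕ) → (M * N) i j = 0 := by
      intro i j hji
      rw [tri_mul_apply' M N hp0 hq0 i j, Finset.Icc_eq_empty (by omega), Finset.sum_empty]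
    refine ⟨hdiag, hlow, ?_⟩
    intro i j hnotij
    dsimp only
    rcases lt_trichotomy ((i:ℕ)) ((j:ℕ)) with hij | hij | hij
    · have hkey := key M N σ τ hp1 hp0 hpγ hq1 hq0 hqγ i j hij
      rw [hkey, hpγ i j hnotij, hqγ i j hnotij]
      rw [if_pos hij, if_pos hij, if_pos hij]
      have hcc := hc ((i:ℕ)+1) (j:ℕ) (by omega) (by omega) (by have := j.isLt; omega)
        (by
          rintro ⟨hi1, hjn⟩
          exact hnotij ⟨Fin.ext (by simp only [Fin.val_zero]; omega), Fin.ext (by simp only [Fin.val_last]; omega)⟩) σ τ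
      linear_combination ((-1:ZMod m)^((j:ℕ)-(i:ℕ))) * hcc
    · have : i = j := Fin.ext hij
      subst this
      rw [hdiag i, if_neg (by omega), if_pos rfl]
    · rw [hlow i j hij, if_neg (by omega), if_neg (by intro h; subst h; omega)]
  · -- product formula at (0, last)
    rintro ⟨M, σ⟩ ⟨N, τ⟩ ⟨hp1, hp0, hpγ⟩ ⟨hq1, hq0, hqγ⟩
    dsimp only at hp1 hp0 hpγ hq1 hq0 hqγ ⊢
    have hkey := key M N σ τ hp1 hp0 hpγ hq1 hq0 hqγ 0 (Fin.last n)
      (by simp only [Fin.val_zero, Fin.val_last]; omega)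
    simp only [Fin.val_zero, Fin.val_last, Nat.sub_zero, Nat.zero_add, zero_add] at hkey
    rw [hkey]
    have hpow : (-1:ZMod m)^n = (-1:ZMod m)^(n-1) * (-1) := by
      rw [← pow_succ]
      congr 1
      omega
    rw [hpow]
    ring
  · -- bijectivity
    intro σ x
    refine ⟨fun i j => if i = 0 ∧ j = Fin.last n then x else
        (if (i : ℕ) < (j : ℕ) then (-1 : ZMod m) ^ ((j : ℕ) - (i : ℕ)) * c ((i : ℕ) + 1) (j : ℕ) σ
         else if i = j then 1 else 0), ⟨⟨?_, ?_, ?_⟩, ?_⟩, ?_⟩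
    · intro i
      dsimp only
      have h0 : ¬(i = 0 ∧ i = Fin.last n) := by
        rintro ⟨rfl, hl⟩
        have : (0:ℕ) = n := by simpa [Fin.ext_iff] using hl
        omega
      rw [if_neg h0, if_neg (by omega), if_pos rfl]
    · intro i j hji
      dsimp only
      have h0 : ¬(i = 0 ∧ j = Fin.last n) := by
        rintro ⟨rfl, rfl⟩
        simp at hji
      rw [if_neg h0, if_neg (by omega), if_neg (by intro h; subst h; omega)]
    · intro i j hnot
      dsimp only
      rw [if_neg hnot]
    · beta_reduce
      rw [if_pos ⟨rfl, rfl⟩]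
    · rintro M' ⟨⟨h1, h2, h3⟩, hx⟩
      dsimp only at h1 h2 h3
      funext i j
      by_cases h : i = 0 ∧ j = Fin.last n
      · obtain ⟨rfl, rfl⟩ := h
        rw [if_pos ⟨rfl, rfl⟩, hx]
      · rw [if_neg h, h3 i j h]
end
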